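/- For any real theta characteristics: let g ≥ 1, let M be a symmetric g × g integer matrix, and consider the group G_M of pairs (A, ·) with A ∈ GL(g, ℤ) and A M Aᵀ ≡ M (mod 2). Then the map sending (A, [β]₂) to [A β - (1/2)·diag(A M Aᵀ - M)]₂ defines a group action of G_M on (ℤ/2ℤ)^g. -/
import Mathlib

open Matrix Finset

/-- The action of a matrix `A` (with `A M Aᵀ ≡ M (mod 2)`) on integer characteristic
vectors: `β ↦ A β - (1/2)·diag(A M Aᵀ - M)` (integer division, exact under the
hypothesis). -/
def act {g : ℕ} (M A : Matrix (Fin g) (Fin g) ℤ) (β : Fin g → ℤ) : Fin g → ℤ :=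
  fun i => A.mulVec β i - ((A * M * Aᵀ - M) i i) / 2


lemma quad_mod2 {n : ℕ} (a : Fin n → ℤ) (E : Matrix (Fin n) (Fin n) ℤ)
    (hE : ∀ j k, E j k = E k j) :
    (∑ j, ∑ k, a j * E j k * a k) ≡ ∑ j, a j * E j j [ZMOD 2] := by
  have key : ((∑ j, ∑ k, a j * E j k * a k : ℤ) : ZMod 2) = ((∑ j, a j * E j j : ℤ) : ZMod 2) := by
    push_cast
    set b : Fin n → ZMod 2 := fun j => ((a j : ZMod 2)) with hb
    set F : Fin n → Fin n → ZMod 2 := fun j k => ((E j k : ZMod 2)) with hF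
    show ∑ j, ∑ k, b j * F j k * b k = ∑ j, b j * F j j
    rw [← Finset.sum_product']
    rw [show ((univ : Finset (Fin n)) ×ˢ univ) = univ.diag ∪ univ.offDiag from
      (Finset.diag_union_offDiag _).symm,
      Finset.sum_union (Finset.disjoint_diag_offDiag _), Finset.sum_diag]
    have hoff : ∑ p ∈ (univ : Finset (Fin n)).offDiag, b p.1 * F p.1 p.2 * b p.2 = 0 := by
      refine Finset.sum_involution (fun p _ => p.swap) ?_ ?_ ?_ ?_
      · intro p hp
        simp only [Prod.fst_swap, Prod.snd_swap]
        have : F p.2 p.1 = F p.1 p.2 := by simp [hF, hE p.2 p.1]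
        rw [this]
        ring_nf
        rw [show (2 : ZMod 2) = 0 by decide]
        ring
      · intro p hp _
        have hne := (Finset.mem_offDiag.mp hp).2.2
        intro h
        rw [Prod.ext_iff] at h
        exact hne (h.2.trans rfl) 
      · intro p hp
        have h := Finset.mem_offDiag.mp hp
        exact Finset.mem_offDiag.mpr ⟨Finset.mem_univ _, Finset.mem_univ _, fun e => h.2.2 e.symm⟩
      · intro p hp; rfl
    rw [hoff, add_zero]
    refine Finset.sum_congr rfl fun j _ => ?_
    have : b j * b j = b j := by
      have : ∀ x : ZMod 2, x * x = x := by decide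
      exact this _
    calc b j * F j j * b j = (b j * b j) * F j j := by ring
      _ = b j * F j j := by rw [this]

  exact (ZMod.intCast_eq_intCast_iff _ _ 2).mp key

theorem stmt14 (g : ℕ) (hg : 1 ≤ g)
    (M : Matrix (Fin g) (Fin g) ℤ) (hM : M.IsSymm) :
    -- well-definedness on (ℤ/2)^g
    (∀ A : Matrix (Fin g) (Fin g) ℤ, IsUnit A.det →
      (∀ i j, (A * M * Aᵀ) i j ≡ M i j [ZMOD 2]) →
      ∀ β β' : Fin g → ℤ, (∀ i, β i ≡ β' i [ZMOD 2]) →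
        ∀ i, act M A β i ≡ act M A β' i [ZMOD 2]) ∧
    -- the identity acts trivially
    (∀ β : Fin g → ℤ, ∀ i, act M 1 β i ≡ β i [ZMOD 2]) ∧
    -- compatibility with the group law
    (∀ A A' : Matrix (Fin g) (Fin g) ℤ, IsUnit A.det → IsUnit A'.det →
      (∀ i j, (A * M * Aᵀ) i j ≡ M i j [ZMOD 2]) →
      (∀ i j, (A' * M * A'ᵀ) i j ≡ M i j [ZMOD 2]) →
      ∀ β : Fin g → ℤ, ∀ i,
        act M (A * A') β i ≡ act M A (act M A' β) i [ZMOD 2]) := by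
  have cast2 : ∀ a b : ℤ, a ≡ b [ZMOD 2] ↔ ((a : ZMod 2) = (b : ZMod 2)) :=
    fun a b => (ZMod.intCast_eq_intCast_iff a b 2).symm
  refine ⟨?_, ?_, ?_⟩
  · -- well-definedness
    intro A _ _ β β' hβ i
    unfold act
    refine Int.ModEq.sub ?_ (Int.ModEq.refl _)
    rw [cast2]
    unfold Matrix.mulVec dotProduct
    push_cast
    refine Finset.sum_congr rfl fun j _ => ?_
    rw [(cast2 _ _).mp (hβ j)]
  · -- identity
    intro β i
    unfold act
    simp [Matrix.one_mulVec]
  · -- compatibility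
    intro A A' _ _ hA hA' β i
    -- D' := A' M A'ᵀ - M has all entries even
    set D' : Matrix (Fin g) (Fin g) ℤ := A' * M * A'ᵀ - M with hD'
    have hD'even : ∀ j k, 2 ∣ D' j k := by
      intro j k
      have h := (hA' j k).symm.dvd
      simpa [hD', Matrix.sub_apply] using h
    -- D' is symmetric
    have hD'symm : ∀ j k, D' j k = D' k j := by
      intro j k
      have h1 : (A' * M * A'ᵀ)ᵀ = A' * M * A'ᵀ := by
        rw [Matrix.transpose_mul, Matrix.transpose_mul, Matrix.transpose_transpose,
          hM.eq, Matrix.mul_assoc]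
      have h2 := congrFun (congrFun h1 k) j
      simp only [Matrix.transpose_apply] at h2
      have h3 : M j k = M k j := by
        have := congrFun (congrFun hM.eq k) j
        simpa [Matrix.transpose_apply] using this
      simp [hD', Matrix.sub_apply, h2, h3]
    -- E := D'/2 entrywise
    set E : Matrix (Fin g) (Fin g) ℤ := fun j k => D' j k / 2 with hEdef
    have hE2 : ∀ j k, D' j k = 2 * E j k := by
      intro j k
      simp only [hEdef]
      exact (Int.mul_ediv_cancel' (hD'even j k)).symm
    have hEsymm : ∀ j k, E j k = E k j := by
      intro j k; simp only [hEdef, hD'symm j k]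
    -- act M A' β = A'.mulVec β - diag E
    have hact' : act M A' β = fun j => A'.mulVec β j - E j j := by
      funext j
      simp only [act, hEdef, hD']
    -- matrix identity for the composed twist
    have hmat : (A * A') * M * (A * A')ᵀ - M = A * D' * Aᵀ + (A * M * Aᵀ - M) := by
      simp only [hD', Matrix.transpose_mul, Matrix.mul_sub, Matrix.sub_mul]
      rw [Matrix.mul_assoc A A' M, Matrix.mul_assoc A (A' * M) (A'ᵀ * Aᵀ),
        ← Matrix.mul_assoc (A' * M) A'ᵀ Aᵀ, ← Matrix.mul_assoc A (A' * M * A'ᵀ) Aᵀ]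
      abel
    -- the quadratic-form diagonal entry
    have hquadentry : (A * D' * Aᵀ) i i = 2 * ∑ j, ∑ k, A i j * E j k * A i k := by
      simp only [Matrix.mul_apply, Matrix.transpose_apply, Finset.sum_mul, Finset.mul_sum]
      rw [Finset.sum_comm]
      refine Finset.sum_congr rfl fun j _ => ?_
      refine Finset.sum_congr rfl fun k _ => ?_
      rw [hE2 j k]
      ring
    -- evenness of the A-part diagonal
    obtain ⟨d, hd⟩ : 2 ∣ (A * M * Aᵀ - M) i i := by
      have h := (hA i i).symm.dvd
      simpa [Matrix.sub_apply] using h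
    -- compute both sides
    have hLHS : act M (A * A') β i
        = A.mulVec (A'.mulVec β) i - (∑ j, ∑ k, A i j * E j k * A i k) - d := by
      simp only [act, Matrix.mulVec_mulVec, hmat, Matrix.add_apply, hquadentry, hd]
      have : (2 * ∑ j, ∑ k, A i j * E j k * A i k + 2 * d) / 2
          = (∑ j, ∑ k, A i j * E j k * A i k) + d := by omega
      rw [this]; ring
    have hRHS : act M A (act M A' β) i
        = A.mulVec (A'.mulVec β) i - (∑ j, A i j * E j j) - d := by
      simp only [act, hact', hd]
      have h1 : A.mulVec (fun j => A'.mulVec β j - E j j) i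
          = A.mulVec (A'.mulVec β) i - ∑ j, A i j * E j j := by
        simp only [Matrix.mulVec, dotProduct, mul_sub, Finset.sum_sub_distrib]
      rw [h1]
      have h2 : (2 * d) / 2 = d := by omega
      rw [h2]
    rw [hLHS, hRHS]
    have hq := quad_mod2 (fun j => A i j) E hEsymm
    have : (∑ j, ∑ k, A i j * E j k * A i k) ≡ ∑ j, A i j * E j j [ZMOD 2] := hq
    exact ((Int.ModEq.refl _).sub this).sub (Int.ModEq.refl d)
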